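/- Soundness of satisfaction classes (Lemma 1, satisfaction part): Let φ be an STL formula with a classification criterion fixed as in the context, let ψ ∈ Cls⁺(φ) be a satisfaction class, and let w be a signal. If w ∈ S(ψ), i.e. there exists a valuation θ ∈ Θ such that w ⊨ ψ(θ), then w ⊨ φ. -/

import Mathlib

namespace STLClass

abbrev Signal (N : ℕ) := ℝ → Fin N → ℝ

def shift {N : ℕ} (w : Signal N) (t : ℝ) : Signal N := fun t' => w (t + t')

inductive STL (N : ℕ) : Type where
  | atom (f : (Fin N → ℝ) → ℝ)
  | falsum
  | not (φ : STL N)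
  | and (φ₁ φ₂ : STL N)
  | or (φ₁ φ₂ : STL N)
  | always (a b : ℝ) (φ : STL N)
  | event (a b : ℝ) (φ : STL N)
  | untl (a b : ℝ) (φ₁ φ₂ : STL N)

def STL.top {N : ℕ} : STL N := .not .falsum

noncomputable def robust {N : ℕ} : STL N → Signal N → EReal
  | .atom f, w => ((f (w 0) : ℝ) : EReal)
  | .falsum, _ => ⊥
  | .not φ, w => - robust φ w
  | .and φ₁ φ₂, w => min (robust φ₁ w) (robust φ₂ w)
  | .or φ₁ φ₂, w => max (robust φ₁ w) (robust φ₂ w)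
  | .always a b φ, w => ⨅ t : Set.Icc a b, robust φ (shift w t.1)
  | .event a b φ, w => ⨆ t : Set.Icc a b, robust φ (shift w t.1)
  | .untl a b φ₁ φ₂, w =>
      ⨆ t : Set.Icc a b,
        min (robust φ₂ (shift w t.1)) (⨅ t' : Set.Ico (0 : ℝ) t.1, robust φ₁ (shift w t'.1))

def Sat {N : ℕ} (w : Signal N) (φ : STL N) : Prop := 0 < robust φ w

def Vio {N : ℕ} (w : Signal N) (φ : STL N) : Prop := robust φ w < 0

/-- An STL formula together with a classification criterion: each temporal operator is
annotated with a natural number `k`, meaning that its interval is split into `k + 1`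
consecutive segments (so the "positive integer" of the criterion is `k + 1`). -/
inductive AForm (N : ℕ) : Type where
  | atom (f : (Fin N → ℝ) → ℝ)
  | falsum
  | not (φ : AForm N)
  | and (φ₁ φ₂ : AForm N)
  | or (φ₁ φ₂ : AForm N)
  | always (a b : ℝ) (k : ℕ) (φ : AForm N)
  | event (a b : ℝ) (k : ℕ) (φ : AForm N)
  | untl (a b : ℝ) (k : ℕ) (φ₁ φ₂ : AForm N)

/-- The underlying STL formula of an annotated formula. -/
def AForm.toSTL {N : ℕ} : AForm N → STL N
  | .atom f => .atom f
  | .falsum => .falsum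
  | .not φ => .not φ.toSTL
  | .and φ₁ φ₂ => .and φ₁.toSTL φ₂.toSTL
  | .or φ₁ φ₂ => .or φ₁.toSTL φ₂.toSTL
  | .always a b _ φ => .always a b φ.toSTL
  | .event a b _ φ => .event a b φ.toSTL
  | .untl a b _ φ₁ φ₂ => .untl a b φ₁.toSTL φ₂.toSTL

/-- Well-formedness: every temporal interval `[a, b]` satisfies `0 ≤ a < b`. -/
def AForm.WF {N : ℕ} : AForm N → Prop
  | .atom _ => True
  | .falsum => True
  | .not φ => φ.WF
  | .and φ₁ φ₂ => φ₁.WF ∧ φ₂.WF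
  | .or φ₁ φ₂ => φ₁.WF ∧ φ₂.WF
  | .always a b _ φ => 0 ≤ a ∧ a < b ∧ φ.WF
  | .event a b _ φ => 0 ≤ a ∧ a < b ∧ φ.WF
  | .untl a b _ φ₁ φ₂ => 0 ≤ a ∧ a < b ∧ φ₁.WF ∧ φ₂.WF

/-- A split of the interval `[a, b]` into `n` consecutive nonsingular segments:
`n + 1` strictly increasing points starting at `a` and ending at `b`.  The segment
`i` is `[pts i.castSucc, pts i.succ]`. -/
structure Split (a b : ℝ) (n : ℕ) : Type where
  pts : Fin (n + 1) → ℝ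
  strictMono : StrictMono pts
  first : pts 0 = a
  last : pts (Fin.last n) = b

/-- The valuation space `Θ` of an annotated formula: a choice of admissible breakpoints
for each temporal subformula. -/
def Val {N : ℕ} : AForm N → Type
  | .atom _ => PUnit
  | .falsum => PUnit
  | .not φ => Val φ
  | .and φ₁ φ₂ => Val φ₁ × Val φ₂
  | .or φ₁ φ₂ => Val φ₁ × Val φ₂
  | .always a b k φ => Split a b (k + 1) × Val φ
  | .event a b k φ => Split a b (k + 1) × Val φ
  | .untl a b k φ₁ φ₂ => Split a b (k + 1) × Val φ₁ × Val φ₂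

/-- Finite conjunction of a list of STL formulas (empty conjunction is `⊤`). -/
def listAnd {N : ℕ} : List (STL N) → STL N
  | [] => STL.top
  | [φ] => φ
  | φ :: φ' :: rest => .and φ (listAnd (φ' :: rest))

/-- Finite disjunction of a list of STL formulas (empty disjunction is `⊥`). -/
def listOr {N : ℕ} : List (STL N) → STL N
  | [] => .falsum
  | [φ] => φ
  | φ :: φ' :: rest => .or φ (listOr (φ' :: rest))

/-- `⋀_{i} f i`. -/
def iAnd {N : ℕ} {k : ℕ} (f : Fin k → STL N) : STL N := listAnd (List.ofFn f)

/-- `⋁_{i} f i`. -/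
def iOr {N : ℕ} {k : ℕ} (f : Fin k → STL N) : STL N := listOr (List.ofFn f)

/-- `Cls true φ` is the set `Cls⁺(φ)` of satisfaction classes and `Cls false φ` is the
set `Cls⁻(φ)` of violation classes; a class is represented by its instantiation map
`Θ → STL N` sending a valuation `θ` to the STL formula `ψ(θ)`. -/
def Cls {N : ℕ} : Bool → (φ : AForm N) → Set (Val φ → STL N)
  | b, .atom f =>
      {fun _ => if b then STL.falsum else STL.top, fun _ => STL.atom f}
  | _, .falsum => {fun _ => STL.falsum}
  | b, .not φ =>
      {c | ∃ ψ ∈ Cls (!b) φ, c = fun θ => STL.not (ψ θ)}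
  | b, .and φ₁ φ₂ =>
      {c | ∃ ψ₁ ∈ Cls b φ₁, ∃ ψ₂ ∈ Cls b φ₂,
        c = fun θ => STL.and (ψ₁ θ.1) (ψ₂ θ.2)}
  | b, .or φ₁ φ₂ =>
      {c | ∃ ψ₁ ∈ Cls b φ₁, ∃ ψ₂ ∈ Cls b φ₂,
        c = fun θ => STL.or (ψ₁ θ.1) (ψ₂ θ.2)}
  | b, .always _ _ k φ =>
      {c | ∃ ψ : Fin (k + 1) → Val φ → STL N, (∀ i, ψ i ∈ Cls b φ) ∧
        c = fun θ => iAnd fun i : Fin (k + 1) =>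
          STL.always (θ.1.pts i.castSucc) (θ.1.pts i.succ) (ψ i θ.2)}
  | b, .event _ _ k φ =>
      {c | ∃ ψ : Fin (k + 1) → Val φ → STL N, (∀ i, ψ i ∈ Cls b φ) ∧
        c = fun θ => iOr fun i : Fin (k + 1) =>
          STL.event (θ.1.pts i.castSucc) (θ.1.pts i.succ) (ψ i θ.2)}
  | b, .untl _ _ k φ₁ φ₂ =>
      {c | ∃ ψ : Fin (k + 1) → Val φ₁ → STL N, ∃ σ : Fin (k + 1) → Val φ₂ → STL N,
           ∃ ξ : Fin (k + 1) → Fin (k + 1) → Val φ₁ → STL N,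
        (∀ i, ψ i ∈ Cls b φ₁) ∧ (∀ i, σ i ∈ Cls b φ₂) ∧ (∀ i j, ξ i j ∈ Cls b φ₁) ∧
        c = fun θ => iOr fun i : Fin (k + 1) =>
          STL.and
            (STL.untl (θ.1.pts i.castSucc) (θ.1.pts i.succ) (ψ i θ.2.1) (σ i θ.2.2))
            (iAnd fun j : Fin (i : ℕ) =>
              STL.always (θ.1.pts (j.castLE i.isLt.le).castSucc)
                (θ.1.pts (j.castLE i.isLt.le).succ) (ξ i (j.castLE i.isLt.le) θ.2.1))}

/-- The satisfiable set `S(ψ)` of a class. -/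
def SatSet {N : ℕ} (φ : AForm N) (ψ : Val φ → STL N) : Set (Signal N) :=
  {w | ∃ θ : Val φ, Sat w (ψ θ)}

/-- The falsifiable set `V(ψ)` of a class. -/
def VioSet {N : ℕ} (φ : AForm N) (ψ : Val φ → STL N) : Set (Signal N) :=
  {w | ∃ θ : Val φ, Vio w (ψ θ)}


/-! ### Auxiliary lemmas for the soundness proof -/

lemma robust_top {N : ℕ} (w : Signal N) : robust (STL.top (N := N)) w = ⊤ := by
  simp [STL.top, robust]

lemma robust_listAnd_le {N : ℕ} :
    ∀ (l : List (STL N)) {φ : STL N}, φ ∈ l → ∀ w, robust (listAnd l) w ≤ robust φ w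
  | [ψ], φ, h, w => by
      simp only [List.mem_singleton] at h; subst h; exact le_rfl
  | ψ :: ψ' :: rest, φ, h, w => by
      rcases List.mem_cons.mp h with rfl | h
      · exact min_le_left _ _
      · exact le_trans (min_le_right _ _) (robust_listAnd_le (ψ' :: rest) h w)

lemma le_robust_listAnd {N : ℕ} :
    ∀ (l : List (STL N)) (x : EReal) (w : Signal N),
      (∀ φ ∈ l, x ≤ robust φ w) → x ≤ robust (listAnd l) w
  | [], x, w, _ => by rw [listAnd, robust_top]; exact le_top
  | [ψ], x, w, h => h ψ (by simp)
  | ψ :: ψ' :: rest, x, w, h =>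
      le_min (h ψ (by simp))
        (le_robust_listAnd (ψ' :: rest) x w fun φ hφ => h φ (List.mem_cons_of_mem _ hφ))

lemma robust_le_listOr {N : ℕ} :
    ∀ (l : List (STL N)) {φ : STL N}, φ ∈ l → ∀ w, robust φ w ≤ robust (listOr l) w
  | [ψ], φ, h, w => by
      simp only [List.mem_singleton] at h; subst h; exact le_rfl
  | ψ :: ψ' :: rest, φ, h, w => by
      rcases List.mem_cons.mp h with rfl | h
      · exact le_max_left _ _
      · exact le_trans (robust_le_listOr (ψ' :: rest) h w) (le_max_right _ _)

lemma robust_listOr_le {N : ℕ} :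
    ∀ (l : List (STL N)) (x : EReal) (w : Signal N),
      (∀ φ ∈ l, robust φ w ≤ x) → robust (listOr l) w ≤ x
  | [], x, w, _ => bot_le
  | [ψ], x, w, h => h ψ (by simp)
  | ψ :: ψ' :: rest, x, w, h =>
      max_le (h ψ (by simp))
        (robust_listOr_le (ψ' :: rest) x w fun φ hφ => h φ (List.mem_cons_of_mem _ hφ))

lemma robust_iAnd_le {N k : ℕ} (f : Fin k → STL N) (i : Fin k) (w : Signal N) :
    robust (iAnd f) w ≤ robust (f i) w :=
  robust_listAnd_le _ (List.mem_ofFn.mpr ⟨i, rfl⟩) w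

lemma le_robust_iAnd {N k : ℕ} {f : Fin k → STL N} {x : EReal} {w : Signal N}
    (h : ∀ i, x ≤ robust (f i) w) : x ≤ robust (iAnd f) w :=
  le_robust_listAnd _ x w fun φ hφ => by
    obtain ⟨i, rfl⟩ := List.mem_ofFn.mp hφ; exact h i

lemma robust_le_iOr {N k : ℕ} (f : Fin k → STL N) (i : Fin k) (w : Signal N) :
    robust (f i) w ≤ robust (iOr f) w :=
  robust_le_listOr _ (List.mem_ofFn.mpr ⟨i, rfl⟩) w

lemma robust_iOr_le {N k : ℕ} {f : Fin k → STL N} {x : EReal} {w : Signal N}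
    (h : ∀ i, robust (f i) w ≤ x) : robust (iOr f) w ≤ x :=
  robust_listOr_le _ x w fun φ hφ => by
    obtain ⟨i, rfl⟩ := List.mem_ofFn.mp hφ; exact h i

lemma Split.left_le {a b : ℝ} {n : ℕ} (s : Split a b n) (i : Fin n) :
    a ≤ s.pts i.castSucc := by
  have h := s.strictMono.monotone (Fin.zero_le i.castSucc)
  rwa [s.first] at h

lemma Split.le_right {a b : ℝ} {n : ℕ} (s : Split a b n) (i : Fin n) :
    s.pts i.succ ≤ b := by
  have h := s.strictMono.monotone (Fin.le_last i.succ)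
  rwa [s.last] at h

lemma split_cover {a b : ℝ} {k : ℕ} (s : Split a b (k + 1)) {t : ℝ}
    (h1 : a ≤ t) (h2 : t ≤ b) :
    ∃ i : Fin (k + 1), s.pts i.castSucc ≤ t ∧ t ≤ s.pts i.succ ∧
      ∀ j : Fin (k + 1), (j : ℕ) < (i : ℕ) → s.pts j.succ < t := by
  classical
  have hex : ∃ m : ℕ, ∃ hm : m < k + 1, t ≤ s.pts (Fin.succ ⟨m, hm⟩) := by
    refine ⟨k, Nat.lt_succ_self k, ?_⟩
    have he : Fin.succ (⟨k, Nat.lt_succ_self k⟩ : Fin (k + 1)) = Fin.last (k + 1) := by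
      ext; simp [Fin.last]
    rw [he, s.last]; exact h2
  obtain ⟨hm, hle⟩ := Nat.find_spec hex
  refine ⟨⟨Nat.find hex, hm⟩, ?_, hle, ?_⟩
  · rcases Nat.eq_zero_or_pos (Nat.find hex) with h0 | hpos
    · have he : Fin.castSucc (⟨Nat.find hex, hm⟩ : Fin (k + 1)) = (0 : Fin (k + 2)) := by
        ext; show Nat.find hex = ((0 : Fin (k + 2)) : ℕ); rw [h0]; simp
      rw [he, s.first]; exact h1
    · have hmin := Nat.find_min hex (Nat.sub_lt hpos one_pos)
      push_neg at hmin
      have hlt := hmin (lt_of_le_of_lt (Nat.sub_le _ 1) hm)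
      have he : Fin.succ (⟨Nat.find hex - 1, lt_of_le_of_lt (Nat.sub_le _ 1) hm⟩ : Fin (k + 1)) =
          Fin.castSucc (⟨Nat.find hex, hm⟩ : Fin (k + 1)) := by
        ext; show Nat.find hex - 1 + 1 = Nat.find hex; omega
      rw [he] at hlt
      exact hlt.le
  · intro j hj
    have hmin := Nat.find_min hex (show (j : ℕ) < Nat.find hex from hj)
    push_neg at hmin
    have hlt := hmin j.isLt
    have he : (⟨(j : ℕ), j.isLt⟩ : Fin (k + 1)) = j := by ext; rfl
    rw [he] at hlt
    exact hlt

lemma cls_bound {N : ℕ} : ∀ (φ : AForm N), φ.WF →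
    (∀ ψ ∈ Cls true φ, ∀ (θ : Val φ) (w : Signal N),
        robust (ψ θ) w ≤ robust φ.toSTL w) ∧
    (∀ ψ ∈ Cls false φ, ∀ (θ : Val φ) (w : Signal N),
        robust φ.toSTL w ≤ robust (ψ θ) w) := by
  intro φ
  induction φ with
  | atom f =>
    intro _
    constructor
    · intro ψ hψ θ w
      simp only [Cls, Set.mem_insert_iff, Set.mem_singleton_iff] at hψ
      rcases hψ with rfl | rfl
      · simp [robust]
      · exact le_rfl
    · intro ψ hψ θ w
      simp only [Cls, Set.mem_insert_iff, Set.mem_singleton_iff] at hψ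
      rcases hψ with rfl | rfl
      · simp only [if_neg Bool.false_ne_true, robust_top]; exact le_top
      · exact le_rfl
  | falsum =>
    intro _
    refine ⟨?_, ?_⟩ <;>
    · intro ψ hψ θ w
      simp only [Cls, Set.mem_singleton_iff] at hψ
      subst hψ
      exact le_rfl
  | not φ ih =>
    intro hwf
    obtain ⟨ihp, ihn⟩ := ih hwf
    constructor
    · intro ψ hψ θ w
      simp only [Cls, Set.mem_setOf_eq, Bool.not_true] at hψ
      obtain ⟨ψ', hψ', rfl⟩ := hψ
      exact EReal.neg_le_neg_iff.mpr (ihn ψ' hψ' θ w)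
    · intro ψ hψ θ w
      simp only [Cls, Set.mem_setOf_eq, Bool.not_false] at hψ
      obtain ⟨ψ', hψ', rfl⟩ := hψ
      exact EReal.neg_le_neg_iff.mpr (ihp ψ' hψ' θ w)
  | and φ₁ φ₂ ih₁ ih₂ =>
    intro hwf
    obtain ⟨ih₁p, ih₁n⟩ := ih₁ hwf.1
    obtain ⟨ih₂p, ih₂n⟩ := ih₂ hwf.2
    constructor
    · intro ψ hψ θ w
      simp only [Cls, Set.mem_setOf_eq] at hψ
      obtain ⟨ψ₁, h1, ψ₂, h2, rfl⟩ := hψ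
      exact min_le_min (ih₁p ψ₁ h1 θ.1 w) (ih₂p ψ₂ h2 θ.2 w)
    · intro ψ hψ θ w
      simp only [Cls, Set.mem_setOf_eq] at hψ
      obtain ⟨ψ₁, h1, ψ₂, h2, rfl⟩ := hψ
      exact min_le_min (ih₁n ψ₁ h1 θ.1 w) (ih₂n ψ₂ h2 θ.2 w)
  | or φ₁ φ₂ ih₁ ih₂ =>
    intro hwf
    obtain ⟨ih₁p, ih₁n⟩ := ih₁ hwf.1
    obtain ⟨ih₂p, ih₂n⟩ := ih₂ hwf.2
    constructor
    · intro ψ hψ θ w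
      simp only [Cls, Set.mem_setOf_eq] at hψ
      obtain ⟨ψ₁, h1, ψ₂, h2, rfl⟩ := hψ
      exact max_le_max (ih₁p ψ₁ h1 θ.1 w) (ih₂p ψ₂ h2 θ.2 w)
    · intro ψ hψ θ w
      simp only [Cls, Set.mem_setOf_eq] at hψ
      obtain ⟨ψ₁, h1, ψ₂, h2, rfl⟩ := hψ
      exact max_le_max (ih₁n ψ₁ h1 θ.1 w) (ih₂n ψ₂ h2 θ.2 w)
  | always a b k φ ih =>
    intro hwf
    obtain ⟨ha, hab, hwfφ⟩ := hwf
    obtain ⟨ihp, ihn⟩ := ih hwfφ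
    constructor
    · intro ψ hψ θ w
      simp only [Cls, Set.mem_setOf_eq] at hψ
      obtain ⟨ψf, hψf, rfl⟩ := hψ
      obtain ⟨s, θ'⟩ := θ
      refine le_iInf ?_
      rintro ⟨t, ht⟩
      obtain ⟨i, hi1, hi2, -⟩ := split_cover s ht.1 ht.2
      refine le_trans (robust_iAnd_le _ i w) ?_
      refine le_trans (iInf_le (fun t' : Set.Icc (s.pts i.castSucc) (s.pts i.succ) =>
        robust (ψf i θ') (shift w t'.1)) ⟨t, hi1, hi2⟩) ?_
      exact ihp _ (hψf i) θ' (shift w t)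
    · intro ψ hψ θ w
      simp only [Cls, Set.mem_setOf_eq] at hψ
      obtain ⟨ψf, hψf, rfl⟩ := hψ
      obtain ⟨s, θ'⟩ := θ
      refine le_robust_iAnd fun i => ?_
      refine le_iInf ?_
      rintro ⟨t, ht⟩
      refine le_trans (iInf_le (fun t' : Set.Icc a b =>
        robust (AForm.toSTL φ) (shift w t'.1))
        ⟨t, le_trans (s.left_le i) ht.1, le_trans ht.2 (s.le_right i)⟩) ?_
      exact ihn _ (hψf i) θ' (shift w t)
  | event a b k φ ih =>
    intro hwf
    obtain ⟨ha, hab, hwfφ⟩ := hwf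
    obtain ⟨ihp, ihn⟩ := ih hwfφ
    constructor
    · intro ψ hψ θ w
      simp only [Cls, Set.mem_setOf_eq] at hψ
      obtain ⟨ψf, hψf, rfl⟩ := hψ
      obtain ⟨s, θ'⟩ := θ
      refine robust_iOr_le fun i => ?_
      refine iSup_le ?_
      rintro ⟨t, ht⟩
      refine le_trans (ihp _ (hψf i) θ' (shift w t)) ?_
      exact le_iSup (fun t' : Set.Icc a b => robust (AForm.toSTL φ) (shift w t'.1))
        ⟨t, le_trans (s.left_le i) ht.1, le_trans ht.2 (s.le_right i)⟩
    · intro ψ hψ θ w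
      simp only [Cls, Set.mem_setOf_eq] at hψ
      obtain ⟨ψf, hψf, rfl⟩ := hψ
      obtain ⟨s, θ'⟩ := θ
      refine iSup_le ?_
      rintro ⟨t, ht⟩
      obtain ⟨i, hi1, hi2, -⟩ := split_cover s ht.1 ht.2
      refine le_trans ?_ (robust_le_iOr _ i w)
      refine le_trans (ihn _ (hψf i) θ' (shift w t)) ?_
      exact le_iSup (fun t' : Set.Icc (s.pts i.castSucc) (s.pts i.succ) =>
        robust (ψf i θ') (shift w t'.1)) ⟨t, hi1, hi2⟩
  | untl a b k φ₁ φ₂ ih₁ ih₂ =>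
    intro hwf
    obtain ⟨ha, hab, hwf₁, hwf₂⟩ := hwf
    obtain ⟨ih₁p, ih₁n⟩ := ih₁ hwf₁
    obtain ⟨ih₂p, ih₂n⟩ := ih₂ hwf₂
    constructor
    · intro ψ hψ θ w
      simp only [Cls, Set.mem_setOf_eq] at hψ
      obtain ⟨ψf, σf, ξf, hψf, hσf, hξf, rfl⟩ := hψ
      obtain ⟨s, θ₁, θ₂⟩ := θ
      refine robust_iOr_le fun i => ?_
      refine le_trans (min_le_left _ _) ?_
      refine iSup_le ?_
      rintro ⟨t, ht⟩
      refine le_trans ?_ (le_iSup (fun t' : Set.Icc a b =>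
        min (robust (AForm.toSTL φ₂) (shift w t'.1))
          (⨅ t'' : Set.Ico (0 : ℝ) t'.1, robust (AForm.toSTL φ₁) (shift w t''.1)))
        ⟨t, le_trans (s.left_le i) ht.1, le_trans ht.2 (s.le_right i)⟩)
      refine min_le_min (ih₂p _ (hσf i) θ₂ (shift w t)) ?_
      refine le_iInf ?_
      rintro ⟨t', ht'⟩
      refine le_trans (iInf_le (fun t'' : Set.Ico (0 : ℝ) t =>
        robust (ψf i θ₁) (shift w t''.1)) ⟨t', ht'⟩) ?_
      exact ih₁p _ (hψf i) θ₁ (shift w t')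
    · intro ψ hψ θ w
      simp only [Cls, Set.mem_setOf_eq] at hψ
      obtain ⟨ψf, σf, ξf, hψf, hσf, hξf, rfl⟩ := hψ
      obtain ⟨s, θ₁, θ₂⟩ := θ
      refine iSup_le ?_
      rintro ⟨t, ht⟩
      obtain ⟨i, hi1, hi2, hmin⟩ := split_cover s ht.1 ht.2
      refine le_trans ?_ (robust_le_iOr _ i w)
      refine le_min ?_ ?_
      · refine le_trans ?_ (le_iSup (fun t' : Set.Icc (s.pts i.castSucc) (s.pts i.succ) =>
          min (robust (σf i θ₂) (shift w t'.1))
            (⨅ t'' : Set.Ico (0 : ℝ) t'.1, robust (ψf i θ₁) (shift w t''.1)))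
          ⟨t, hi1, hi2⟩)
        refine min_le_min (ih₂n _ (hσf i) θ₂ (shift w t)) ?_
        refine le_iInf ?_
        rintro ⟨t', ht'⟩
        refine le_trans (iInf_le (fun t'' : Set.Ico (0 : ℝ) t =>
          robust (AForm.toSTL φ₁) (shift w t''.1)) ⟨t', ht'⟩) ?_
        exact ih₁n _ (hψf i) θ₁ (shift w t')
      · refine le_robust_iAnd fun j => ?_
        refine le_iInf ?_
        rintro ⟨t', ht'⟩
        have h0t' : (0 : ℝ) ≤ t' :=
          le_trans ha (le_trans (s.left_le _) ht'.1)
        have ht'lt : t' < t :=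
          lt_of_le_of_lt ht'.2 (hmin (j.castLE i.isLt.le) j.isLt)
        refine le_trans (min_le_right _ _) ?_
        refine le_trans (iInf_le (fun t'' : Set.Ico (0 : ℝ) t =>
          robust (AForm.toSTL φ₁) (shift w t''.1)) ⟨t', h0t', ht'lt⟩) ?_
        exact ih₁n _ (hξf i (j.castLE i.isLt.le)) θ₁ (shift w t')


/-- Soundness of satisfaction classes (Lemma 1, satisfaction part): if `ψ ∈ Cls⁺(φ)`
and `w ∈ S(ψ)`, i.e. `w ⊨ ψ(θ)` for some valuation `θ ∈ Θ`, then `w ⊨ φ`. -/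
theorem sat_class_sound {N : ℕ} (φ : AForm N) (hφ : φ.WF)
    (ψ : Val φ → STL N) (hψ : ψ ∈ Cls true φ) (w : Signal N)
    (hw : ∃ θ : Val φ, Sat w (ψ θ)) : Sat w φ.toSTL := by
  obtain ⟨θ, hθ⟩ := hw
  exact lt_of_lt_of_le hθ ((cls_bound φ hφ).1 ψ hψ θ w)

end STLClass
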